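/- Fix an integer s ≥ 5 and let σ = (4s+3, 2s+1, s+1, s, 1, …, 1) with s trailing entries equal to 1. Then T^σ_{11s²−33s+24} ≤ 22s² − 22s − 28; that is, for every α ∈ ℤ_{≥0}^{s+4} with Σ_j α_j(α_j+1) ≤ 2(11s² − 33s + 24), one has σ·α ≤ 22s² − 22s − 28. -/
import Mathlib


open Finset

/-- `σ` is a changemaker vector: all entries are positive and every integer `k` with
`0 ≤ k ≤ σ_0 + ⋯ + σ_n` is the sum of a subset of the entries. -/
def IsChangemaker {n : ℕ} (σ : Fin (n + 1) → ℕ) : Prop :=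
  (∀ i, 0 < σ i) ∧
    ∀ k : ℕ, k ≤ ∑ i, σ i → ∃ A : Finset (Fin (n + 1)), ∑ i ∈ A, σ i = k

/-- `Tcm σ m = T^σ_m`, the maximum of `σ·α` over all `α ∈ ℤ_{≥0}^{n+1}` with
`Σ_j α_j (α_j + 1) ≤ 2m` (the maximum exists: the set is nonempty and bounded). -/
noncomputable def Tcm {n : ℕ} (σ : Fin (n + 1) → ℕ) (m : ℕ) : ℕ :=
  sSup {t : ℕ | ∃ α : Fin (n + 1) → ℕ,
    (∑ j, α j * (α j + 1)) ≤ 2 * m ∧ t = ∑ j, σ j * α j}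

/-- `Vcm σ i = V^σ_i`, the `i`-th relevant coefficient of `σ`:
the least `m` with `T^σ_m ≥ i` (and `V^σ_0 = 0`). -/
noncomputable def Vcm {n : ℕ} (σ : Fin (n + 1) → ℕ) (i : ℕ) : ℕ :=
  sInf {m : ℕ | i ≤ Tcm σ m}

lemma consec_nonneg (z : ℤ) : 0 ≤ z * (z + 1) := by
  rcases le_or_gt 0 z with h | h
  · exact mul_nonneg h (by linarith)
  · have : 0 ≤ (-z) * (-(z+1)) := mul_nonneg (by omega) (by omega)
    nlinarith [this]

lemma keylem : ∀ k0 : Fin 11, ∀ k1 : Fin 11, ∀ k2 : Fin 11, ∀ k3 : Fin 11,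
    (k0.val*k0.val+k1.val*k1.val+k2.val*k2.val+k3.val*k3.val ≤ 109 + (k0.val+k1.val+k2.val+k3.val) →
    8*k0.val+4*k1.val+2*k2.val+2*k3.val ≤ 104 ∧
    5*(8*k0.val+4*k1.val+2*k2.val+2*k3.val) + (6*k0.val+2*k1.val+2*k2.val) + (k0.val+k1.val+k2.val+k3.val)
      ≤ 487 + (k0.val*k0.val+k1.val*k1.val+k2.val*k2.val+k3.val*k3.val)) := by decide

lemma coord_facts (v x : ℤ) (hv : 0 ≤ v) (hx : 0 ≤ x) (hb : v - x ≤ 10) :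
    ((v - x).toNat : ℤ) ≤ 10 ∧
    ((v - x).toNat : ℤ) * (((v - x).toNat : ℤ) - 1) ≤ (x - v) * ((x - v) + 1) ∧
    (v - ((v - x).toNat : ℤ)) * ((v - ((v - x).toNat : ℤ)) + 1) ≤ x * (x + 1) := by
  rcases le_or_gt x v with h | h
  · have hk : ((v - x).toNat : ℤ) = v - x := Int.toNat_of_nonneg (by linarith)
    rw [hk]
    exact ⟨hb, le_of_eq (by ring), le_of_eq (by ring)⟩
  · have hk : (v - x).toNat = 0 := Int.toNat_of_nonpos (by linarith)
    rw [hk]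
    push_cast
    refine ⟨by norm_num, by linarith [consec_nonneg (x - v)], ?_⟩
    have h1 : v + 1 ≤ x + 1 := by linarith
    calc (v - 0) * (v - 0 + 1) = v * (v+1) := by ring
      _ ≤ x * (x + 1) := mul_le_mul h.le h1 (by linarith) hx

lemma delta_lb (s x0 x1 x2 x3 : ℤ) (hs : 5 ≤ s) (h0 : 0 ≤ x0) (h1 : 0 ≤ x1)
    (h2 : 0 ≤ x2) (h3 : 0 ≤ x3)
    (hP : x0*(x0+1)+x1*(x1+1)+x2*(x2+1)+x3*(x3+1) ≤ 22*s^2 - 66*s + 48) :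
    110 ≤ (x0-(4*s+3))*((x0-(4*s+3))+1) + (x1-(2*s+1))*((x1-(2*s+1))+1)
        + (x2-(s+1))*((x2-(s+1))+1) + (x3-s)*((x3-s)+1) := by
  by_contra hcon
  push_neg at hcon
  have n0 := consec_nonneg (x0-(4*s+3))
  have n1 := consec_nonneg (x1-(2*s+1))
  have n2 := consec_nonneg (x2-(s+1))
  have n3 := consec_nonneg (x3-s)
  have hD : (x0-(4*s+3))*((x0-(4*s+3))+1) + (x1-(2*s+1))*((x1-(2*s+1))+1)
        + (x2-(s+1))*((x2-(s+1))+1) + (x3-s)*((x3-s)+1) ≤ 109 := by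
    have := Int.lt_iff_add_one_le.mp hcon
    linarith
  have b0 : 4*s+3 - x0 ≤ 10 := by
    by_contra hb; push_neg at hb
    linarith [mul_nonneg (show (0:ℤ) ≤ (4*s+3-x0) - 11 by linarith)
      (show (0:ℤ) ≤ (4*s+3-x0) + 10 by linarith)]
  have b1 : 2*s+1 - x1 ≤ 10 := by
    by_contra hb; push_neg at hb
    linarith [mul_nonneg (show (0:ℤ) ≤ (2*s+1-x1) - 11 by linarith)
      (show (0:ℤ) ≤ (2*s+1-x1) + 10 by linarith)]
  have b2 : s+1 - x2 ≤ 10 := by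
    by_contra hb; push_neg at hb
    linarith [mul_nonneg (show (0:ℤ) ≤ (s+1-x2) - 11 by linarith)
      (show (0:ℤ) ≤ (s+1-x2) + 10 by linarith)]
  have b3 : s - x3 ≤ 10 := by
    by_contra hb; push_neg at hb
    linarith [mul_nonneg (show (0:ℤ) ≤ (s-x3) - 11 by linarith)
      (show (0:ℤ) ≤ (s-x3) + 10 by linarith)]
  obtain ⟨c0a, c0b, c0c⟩ := coord_facts (4*s+3) x0 (by linarith) h0 b0
  obtain ⟨c1a, c1b, c1c⟩ := coord_facts (2*s+1) x1 (by linarith) h1 b1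
  obtain ⟨c2a, c2b, c2c⟩ := coord_facts (s+1) x2 (by linarith) h2 b2
  obtain ⟨c3a, c3b, c3c⟩ := coord_facts s x3 (by linarith) h3 b3
  set k0 : ℕ := ((4*s+3) - x0).toNat with hk0
  set k1 : ℕ := ((2*s+1) - x1).toNat with hk1
  set k2 : ℕ := ((s+1) - x2).toNat with hk2
  set k3 : ℕ := (s - x3).toNat with hk3
  have l0 : k0 < 11 := by exact_mod_cast Int.lt_add_one_iff.mpr c0a
  have l1 : k1 < 11 := by exact_mod_cast Int.lt_add_one_iff.mpr c1a
  have l2 : k2 < 11 := by exact_mod_cast Int.lt_add_one_iff.mpr c2a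
  have l3 : k3 < 11 := by exact_mod_cast Int.lt_add_one_iff.mpr c3a
  have hsumk : k0*k0+k1*k1+k2*k2+k3*k3 ≤ 109 + (k0+k1+k2+k3) := by
    zify
    linarith [c0b, c1b, c2b, c3b, hD, n0, n1, n2, n3]
  obtain ⟨hc, hd⟩ := keylem ⟨k0, l0⟩ ⟨k1, l1⟩ ⟨k2, l2⟩ ⟨k3, l3⟩ hsumk
  have hcz : 8*(k0:ℤ)+4*(k1:ℤ)+2*(k2:ℤ)+2*(k3:ℤ) ≤ 104 := by exact_mod_cast hc
  have hdz : 5*(8*(k0:ℤ)+4*(k1:ℤ)+2*(k2:ℤ)+2*(k3:ℤ)) + (6*(k0:ℤ)+2*(k1:ℤ)+2*(k2:ℤ))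
      + ((k0:ℤ)+(k1:ℤ)+(k2:ℤ)+(k3:ℤ))
      ≤ 487 + ((k0:ℤ)*(k0:ℤ)+(k1:ℤ)*(k1:ℤ)+(k2:ℤ)*(k2:ℤ)+(k3:ℤ)*(k3:ℤ)) := by
    exact_mod_cast hd
  have hint : 0 ≤ (104 - (8*(k0:ℤ)+4*(k1:ℤ)+2*(k2:ℤ)+2*(k3:ℤ))) * (s - 5) :=
    mul_nonneg (by linarith) (by linarith)
  linarith [c0c, c1c, c2c, c3c, hP, hint, hdz]

theorem stmt_16 (s : ℕ) (hs : 5 ≤ s) (σ : Fin (s + 3 + 1) → ℕ)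
    (hσ : σ = fun j : Fin (s + 3 + 1) => if j.val = 0 then 4 * s + 3
      else if j.val = 1 then 2 * s + 1
      else if j.val = 2 then s + 1
      else if j.val = 3 then s else 1) :
    Tcm σ (11 * s ^ 2 - 33 * s + 24) ≤ 22 * s ^ 2 - 22 * s - 28 := by
  subst hσ
  refine csSup_le' ?_
  rintro t ⟨α, hα, rfl⟩
  have t0 : ∀ n:ℕ, ¬(n+1+1+1+1 = 0) := fun n => by omega
  have t1 : ∀ n:ℕ, ¬(n+1+1+1+1 = 1) := fun n => by omega
  have t2 : ∀ n:ℕ, ¬(n+1+1+1+1 = 2) := fun n => by omega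
  have t3 : ∀ n:ℕ, ¬(n+1+1+1+1 = 3) := fun n => by omega
  simp only [Fin.sum_univ_succ, Fin.val_succ, Fin.val_zero] at hα ⊢
  norm_num [t0, t1, t2, t3] at hα ⊢
  have hAW : 2 * (∑ x : Fin s, α x.succ.succ.succ.succ)
      ≤ ∑ i : Fin s, α i.succ.succ.succ.succ * (α i.succ.succ.succ.succ + 1) := by
    rw [Finset.mul_sum]
    apply Finset.sum_le_sum
    intro i _
    zify
    linarith [consec_nonneg ((α i.succ.succ.succ.succ : ℤ) - 1)]
  have hss : 5*s ≤ s^2 := by nlinarith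
  have h33 : 33 * s ≤ 11 * s^2 := by omega
  have h22 : 22 * s ≤ 22 * s^2 := by omega
  have h28 : 28 ≤ 22 * s^2 - 22 * s := by omega
  zify [h33] at hα
  zify [h22, h28]
  zify at hAW
  have hW : (0:ℤ) ≤ ∑ i : Fin s, (α i.succ.succ.succ.succ : ℤ) * ((α i.succ.succ.succ.succ : ℤ) + 1) := by
    positivity
  have hd := delta_lb (s:ℤ) (α 0 : ℤ) (α 1 : ℤ) (α 2 : ℤ) (α (Fin.succ 2) : ℤ)
    (by exact_mod_cast hs) (Int.natCast_nonneg _) (Int.natCast_nonneg _)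
    (Int.natCast_nonneg _) (Int.natCast_nonneg _) (by linarith [hα, hW])
  linarith [hd, hα, hAW]
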